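/- arXiv:1701.03444 — 2 statements merged into one kernel-verified Lean document; each statement's English description precedes it below -/
import Mathlib

section
/- If g : [0,T] → ℝ^d is measurable with ‖g‖_{L^p([0,T])} < ∞ for some p ∈ [2,∞), and τ_j ~ U(0,1) are independent, then each summand of the randomized Riemann sum error is centered: for every j, E[∫_{t_{j-1}}^{t_j} (g(s) - g(t_{j-1} + h τ_j)) ds] = 0, and the partial sums E^n = ∫_0^{t_n} g(s) ds - Q^n_{τ,h}[g] form a discrete-time L^p-martingale. -/
open MeasureTheory ProbabilityTheory Real
open scoped ENNReal

lemma unif_law {Ω : Type*} [MeasureSpace Ω] {X : Ω → ℝ}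
    (hX : pdf.IsUniform X (Set.Ioo (0:ℝ) 1) ℙ volume) :
    Measure.map X ℙ = volume.restrict (Set.Ioo (0:ℝ) 1) := by
  rw [pdf.IsUniform] at hX
  rw [hX, ProbabilityTheory.cond, Real.volume_Ioo]
  simp

lemma affine_preimage (a : ℝ) {h : ℝ} (hh : 0 < h) :
    (fun x : ℝ => a + h * x) ⁻¹' Set.Ioo a (a + h) = Set.Ioo 0 1 := by
  ext x
  simp only [Set.mem_preimage, Set.mem_Ioo]
  constructor
  · rintro ⟨h1, h2⟩; constructor <;> nlinarith
  · rintro ⟨h1, h2⟩; constructor <;> nlinarith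

lemma affine_map_volume (a : ℝ) {h : ℝ} (hh : 0 < h) :
    Measure.map (fun x : ℝ => a + h * x) volume
      = (ENNReal.ofReal h)⁻¹ • volume := by
  have heq : (fun x : ℝ => a + h * x) = (fun y : ℝ => a + y) ∘ fun x : ℝ => h * x := rfl
  rw [heq, ← Measure.map_map (measurable_const_add a) (measurable_const_mul h),
    Real.map_volume_mul_left (ne_of_gt hh), Measure.map_smul,
    Measure.IsAddLeftInvariant.map_add_left_eq_self a]
  congr 1
  rw [abs_of_pos (inv_pos.2 hh), ENNReal.ofReal_inv_of_pos hh]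

lemma affine_map_restrict (a : ℝ) {h : ℝ} (hh : 0 < h) :
    Measure.map (fun x : ℝ => a + h * x) (volume.restrict (Set.Ioo 0 1))
      = (ENNReal.ofReal h)⁻¹ • volume.restrict (Set.Ioo a (a + h)) := by
  have hf : Measurable fun x : ℝ => a + h * x := (measurable_const_mul h).const_add a
  rw [← affine_preimage a hh, ← Measure.restrict_map hf measurableSet_Ioo,
    affine_map_volume a hh, Measure.restrict_smul]

lemma key {Ω : Type*} [MeasureSpace Ω] [IsProbabilityMeasure (ℙ : Measure Ω)] {d : ℕ}
    {T p : ℝ} {g : ℝ → EuclideanSpace ℝ (Fin d)}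
    (hgp : MemLp g (ENNReal.ofReal p) (volume.restrict (Set.Icc (0:ℝ) T)))
    {h : ℝ} (hh0 : 0 < h) {a : ℝ} (ha0 : 0 ≤ a) (haT : a + h ≤ T)
    {X : Ω → ℝ} (hXm : Measurable X)
    (hX : Measure.map X ℙ = volume.restrict (Set.Ioo (0:ℝ) 1)) :
    MemLp (fun ω => g (a + h * X ω)) (ENNReal.ofReal p) ℙ ∧
      h • ∫ ω, g (a + h * X ω) ∂ℙ = ∫ s in Set.Ioc a (a + h), g s := by
  have hYm : Measurable fun ω => a + h * X ω := (hXm.const_mul h).const_add a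
  have hY : Measure.map (fun ω => a + h * X ω) ℙ
      = (ENNReal.ofReal h)⁻¹ • volume.restrict (Set.Ioo a (a + h)) := by
    have heq : (fun ω => a + h * X ω) = (fun x : ℝ => a + h * x) ∘ X := rfl
    rw [heq, ← Measure.map_map ((measurable_const_mul h).const_add a) hXm, hX,
      affine_map_restrict a hh0]
  have hss : Set.Ioo a (a + h) ⊆ Set.Icc (0:ℝ) T := fun x hx =>
    Set.mem_Icc.mpr ⟨(ha0.trans_lt hx.1).le, hx.2.le.trans haT⟩
  have hsub : volume.restrict (Set.Ioo a (a + h)) ≤ volume.restrict (Set.Icc (0:ℝ) T) :=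
    Measure.restrict_mono hss le_rfl
  have hcne : (ENNReal.ofReal h)⁻¹ ≠ ∞ :=
    ENNReal.inv_ne_top.mpr (by simp [ENNReal.ofReal_eq_zero, not_le, hh0])
  have hg' : MemLp g (ENNReal.ofReal p) (Measure.map (fun ω => a + h * X ω) ℙ) := by
    rw [hY]; exact (hgp.mono_measure hsub).smul_measure hcne
  refine ⟨(memLp_map_measure_iff hg'.aestronglyMeasurable hYm.aemeasurable).1 hg', ?_⟩
  have hint : ∫ ω, g (a + h * X ω) ∂ℙ
      = h⁻¹ • ∫ s in Set.Ioo a (a + h), g s := by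
    rw [← integral_map hYm.aemeasurable hg'.aestronglyMeasurable, hY,
      integral_smul_measure, ENNReal.toReal_inv, ENNReal.toReal_ofReal hh0.le]
  rw [hint, smul_smul, mul_inv_cancel₀ (ne_of_gt hh0), one_smul,
    ← integral_Ioc_eq_integral_Ioo]

/-- Each summand of the randomized Riemann sum error is centered, and the partial-sum
error process `E^n = ∫_0^{t_n} g − Q^n_{τ,h}[g]` is a discrete-time `L^p`-martingale
(with respect to some filtration). -/
theorem randomized_riemann_error_is_Lp_martingale
    {Ω : Type*} [MeasureSpace Ω] [IsProbabilityMeasure (ℙ : Measure Ω)]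
    {d : ℕ} (T : ℝ) (hT : 0 < T) (p : ℝ) (hp : 2 ≤ p)
    (g : ℝ → EuclideanSpace ℝ (Fin d)) (hgmeas : Measurable g)
    (hgp : MemLp g (ENNReal.ofReal p) (volume.restrict (Set.Icc (0:ℝ) T)))
    (τ : ℕ → Ω → ℝ) (hτmeas : ∀ j, Measurable (τ j))
    (hτindep : iIndepFun τ ℙ)
    (hτunif : ∀ j, pdf.IsUniform (τ j) (Set.Ioo (0:ℝ) 1) ℙ volume)
    (h : ℝ) (hh0 : 0 < h) (hh1 : h < 1)
    (N : ℕ) (hN : (N : ℝ) * h ≤ T) (hN' : T < ((N : ℝ) + 1) * h)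
    (E : ℕ → Ω → EuclideanSpace ℝ (Fin d))
    (hE : ∀ n, E n = fun ω =>
      (∫ s in Set.Ioc (0:ℝ) ((n : ℝ) * h), g s)
        - h • ∑ j ∈ Finset.range n, g ((j : ℝ) * h + h * τ (j + 1) ω)) :
    (∀ j : ℕ, j + 1 ≤ N →
      ∫ ω, ((∫ s in Set.Ioc ((j : ℝ) * h) (((j : ℝ) + 1) * h), g s)
        - h • g ((j : ℝ) * h + h * τ (j + 1) ω)) ∂ℙ = 0) ∧
    (∀ n, n ≤ N → MemLp (E n) (ENNReal.ofReal p) ℙ) ∧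
    (∃ ℱ : Filtration ℕ (inferInstance : MeasurableSpace Ω),
      Martingale (fun n => E (min n N)) ℱ ℙ) := by
  have hq1 : (1 : ℝ≥0∞) ≤ ENNReal.ofReal p := by
    rw [← ENNReal.ofReal_one]; exact ENNReal.ofReal_le_ofReal (by linarith)
  have hjT : ∀ j : ℕ, j + 1 ≤ N → (j:ℝ) * h + h ≤ T := by
    intro j hj
    have h1 : ((j:ℝ) + 1) * h ≤ (N:ℝ) * h := by
      apply mul_le_mul_of_nonneg_right _ hh0.le
      exact_mod_cast hj
    nlinarith
  have hkey : ∀ j : ℕ, j + 1 ≤ N →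
      MemLp (fun ω => g ((j:ℝ) * h + h * τ (j+1) ω)) (ENNReal.ofReal p) ℙ ∧
      h • ∫ ω, g ((j:ℝ) * h + h * τ (j+1) ω) ∂ℙ
        = ∫ s in Set.Ioc ((j:ℝ)*h) ((j:ℝ)*h + h), g s := fun j hj =>
    key hgp hh0 (by positivity) (hjT j hj) (hτmeas (j+1)) (unif_law (hτunif (j+1)))
  have part1 : ∀ j : ℕ, j + 1 ≤ N →
      ∫ ω, ((∫ s in Set.Ioc ((j : ℝ) * h) (((j : ℝ) + 1) * h), g s)
        - h • g ((j : ℝ) * h + h * τ (j + 1) ω)) ∂ℙ = 0 := by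
    intro j hj
    obtain ⟨hmem, hI⟩ := hkey j hj
    have hInt : Integrable (fun ω => g ((j:ℝ)*h + h * τ (j+1) ω)) ℙ := hmem.integrable hq1
    have h1 : ((j:ℝ) + 1) * h = (j:ℝ)*h + h := by ring
    have h2 : Integrable (fun ω => h • g ((j:ℝ)*h + h * τ (j+1) ω)) ℙ := hInt.smul h
    rw [h1, integral_sub (integrable_const _) h2, integral_const, integral_smul, hI]
    simp
  have part2 : ∀ n, n ≤ N → MemLp (E n) (ENNReal.ofReal p) ℙ := by
    intro n hn
    rw [hE n]
    refine MemLp.sub (memLp_const _) ?_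
    refine MemLp.const_smul ?_ h
    exact memLp_finset_sum _ (fun j hj =>
      (hkey j (by have := Finset.mem_range.1 hj; omega)).1)
  refine ⟨part1, part2, ?_⟩
  set ℱ : Filtration ℕ (inferInstance : MeasurableSpace Ω) :=
    Filtration.natural (fun j => τ j) (fun j => (hτmeas j).stronglyMeasurable) with hℱ
  have hτℱ : ∀ k n : ℕ, k ≤ n → Measurable[ℱ n] (τ k) := by
    intro k n hkn
    have hle : MeasurableSpace.comap (τ k) Real.measurableSpace ≤ ℱ n := by
      have h1 : MeasurableSpace.comap (τ k) Real.measurableSpace ≤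
          ⨆ j, ⨆ _ : j ≤ n, MeasurableSpace.comap (τ j) Real.measurableSpace :=
        le_biSup (fun j => MeasurableSpace.comap (τ j) Real.measurableSpace) hkn
      exact h1
    exact fun s hs => hle _ ⟨s, hs, rfl⟩
  have hEsm : ∀ (m : MeasurableSpace Ω) (n : ℕ),
      (∀ j, j < n → Measurable[m] (τ (j+1))) → StronglyMeasurable[m] (E n) := by
    intro m n hm
    rw [hE n]
    refine StronglyMeasurable.sub stronglyMeasurable_const ?_
    refine StronglyMeasurable.const_smul ?_ h
    refine Finset.stronglyMeasurable_fun_sum _ ?_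
    intro j hj
    exact hgmeas.stronglyMeasurable.comp_measurable
      (((hm j (Finset.mem_range.1 hj)).const_mul h).const_add _)
  have hadp : StronglyAdapted ℱ (fun n => E (min n N)) := by
    intro n
    exact hEsm (ℱ n) (min n N) (fun j hj => hτℱ (j+1) n (by omega))
  have hgInt : IntegrableOn g (Set.Icc 0 T) volume := hgp.integrable hq1
  have htel : ∀ m : ℕ, m ≤ N →
      (∫ s in Set.Ioc (0:ℝ) ((m:ℝ)*h), g s)
        = ∑ k ∈ Finset.range m, ∫ s in Set.Ioc ((k:ℝ)*h) ((k:ℝ)*h + h), g s := by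
    intro m hm
    induction m with
    | zero => simp
    | succ m ih =>
      have hmN : m ≤ N := by omega
      have h1 : (0:ℝ) ≤ (m:ℝ)*h := by positivity
      have hmT : (m:ℝ)*h + h ≤ T := hjT m hm
      have hcast : ((m+1 : ℕ) : ℝ) * h = (m:ℝ)*h + h := by push_cast; ring
      rw [hcast, ← Set.Ioc_union_Ioc_eq_Ioc h1 (by linarith : (m:ℝ)*h ≤ (m:ℝ)*h + h),
        setIntegral_union (Set.Ioc_disjoint_Ioc_of_le le_rfl) measurableSet_Ioc
          (hgInt.mono_set (fun x hx => Set.mem_Icc.mpr ⟨hx.1.le, hx.2.trans (by linarith)⟩))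
          (hgInt.mono_set (fun x hx => Set.mem_Icc.mpr ⟨h1.trans hx.1.le, hx.2.trans hmT⟩)),
        Finset.sum_range_succ, ih hmN]
  refine ⟨ℱ, hadp, ?_⟩
  intro i j hij
  set mi := min i N with hmi
  set mj := min j N with hmj
  have hmm : mi ≤ mj := by omega
  set C : EuclideanSpace ℝ (Fin d) :=
    (∫ s in Set.Ioc (0:ℝ) ((mj:ℝ)*h), g s) - ∫ s in Set.Ioc (0:ℝ) ((mi:ℝ)*h), g s with hC
  set D : Ω → EuclideanSpace ℝ (Fin d) :=
    fun ω => C - h • ∑ k ∈ Finset.Ico mi mj, g ((k:ℝ)*h + h * τ (k+1) ω) with hD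
  have hkIco : ∀ k ∈ Finset.Ico mi mj, k + 1 ≤ N ∧ i < k + 1 := by
    intro k hk
    rw [Finset.mem_Ico] at hk
    omega
  have hsplit : E mj = fun ω => E mi ω + D ω := by
    funext ω
    rw [hE, hE, hD]
    simp only
    rw [Finset.sum_Ico_eq_sub _ hmm, smul_sub, hC]
    abel
  have hsumInt : Integrable (fun ω => ∑ k ∈ Finset.Ico mi mj,
      g ((k:ℝ)*h + h * τ (k+1) ω)) ℙ :=
    integrable_finset_sum _ (fun k hk => ((hkey k (hkIco k hk).1).1.integrable hq1))
  have hDint : Integrable D ℙ := by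
    rw [hD]
    exact (integrable_const C).sub (hsumInt.smul h)
  have hDzero : ∫ ω, D ω ∂ℙ = 0 := by
    have h2 : Integrable (fun ω => h • ∑ k ∈ Finset.Ico mi mj,
        g ((k:ℝ)*h + h * τ (k+1) ω)) ℙ := hsumInt.smul h
    have h3 : ∫ ω, D ω ∂ℙ = ∫ ω, (C - h • ∑ k ∈ Finset.Ico mi mj,
        g ((k:ℝ)*h + h * τ (k+1) ω)) ∂ℙ := rfl
    rw [h3, integral_sub (integrable_const _) h2, integral_const, integral_smul,
      integral_finset_sum _ (fun k hk => ((hkey k (hkIco k hk).1).1.integrable hq1)),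
      Finset.smul_sum,
      Finset.sum_congr rfl (fun k hk => (hkey k (hkIco k hk).1).2),
      hC, htel mj (min_le_right _ _), htel mi (min_le_right _ _),
      ← Finset.sum_Ico_eq_sub _ hmm]
    simp
  set M : MeasurableSpace Ω :=
    ⨆ k ∈ {k : ℕ | i < k}, MeasurableSpace.comap (τ k) Real.measurableSpace with hM
  have hindep : Indep M (ℱ i) ℙ := by
    have h_indep := (iIndepFun_iff_iIndep _ _ _).1 hτindep
    have hbi := indep_biSup_compl (fun n => (hτmeas n).comap_le) h_indep {k : ℕ | i < k}
    have hs : ({k : ℕ | i < k}ᶜ : Set ℕ) = {k : ℕ | k ≤ i} := by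
      ext k; simp [not_lt]
    rw [hs] at hbi
    have hFeq : (ℱ i : MeasurableSpace Ω)
        = ⨆ k ∈ {k : ℕ | k ≤ i}, MeasurableSpace.comap (τ k) Real.measurableSpace := rfl
    rw [hM, hFeq]
    exact hbi
  have hDsm : StronglyMeasurable[M] D := by
    rw [hD]
    refine StronglyMeasurable.sub stronglyMeasurable_const ?_
    refine StronglyMeasurable.const_smul ?_ h
    refine Finset.stronglyMeasurable_fun_sum _ ?_
    intro k hk
    have hle : MeasurableSpace.comap (τ (k+1)) Real.measurableSpace ≤ M := by
      exact le_biSup (fun k => MeasurableSpace.comap (τ k) Real.measurableSpace)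
        (show (k+1) ∈ {k : ℕ | i < k} from (hkIco k hk).2)
    have hτk : Measurable[M] (τ (k+1)) := fun s hs => hle _ ⟨s, hs, rfl⟩
    exact hgmeas.stronglyMeasurable.comp_measurable ((hτk.const_mul h).const_add _)
  have hcond : (ℙ[D | ℱ i]) =ᵐ[ℙ] fun _ => ∫ ω, D ω ∂ℙ :=
    condExp_indep_eq (iSup₂_le fun k _ => (hτmeas k).comap_le) (ℱ.le i) hDsm hindep
  have hmiInt : Integrable (E mi) ℙ := (part2 mi (min_le_right _ _)).integrable hq1
  have hmiSM : StronglyMeasurable[ℱ i] (E mi) :=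
    hEsm (ℱ i) mi (fun j hj => hτℱ (j+1) i (by omega))
  have hEcond : ℙ[E mi | ℱ i] = E mi :=
    condExp_of_stronglyMeasurable (ℱ.le i) hmiSM hmiInt
  show ℙ[E mj | ℱ i] =ᵐ[ℙ] E mi
  have hsplit' : E mj = E mi + D := by
    rw [hsplit]; rfl
  calc ℙ[E mj | ℱ i] = ℙ[E mi + D | ℱ i] := by rw [hsplit']
    _ =ᵐ[ℙ] ℙ[E mi | ℱ i] + ℙ[D | ℱ i] := condExp_add hmiInt hDint _
    _ =ᵐ[ℙ] E mi := by
        rw [hEcond]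
        filter_upwards [hcond] with ω hω
        simp [hω, hDzero]
end

section
/- Equivalent reformulation of the Borel–Cantelli step-size lemma: under the hypotheses p ∈ [1,∞), ρ > 1/p, ∑_m h_m < ∞, and sup_m h_m^{−ρ}‖X_m‖_{L^p(Ω)} < ∞, there exist a set A of probability one and a nonnegative random variable M ∈ L^p(Ω;ℝ) such that |X_m(ω)| ≤ M(ω) h_m^{ρ − 1/p} for all m ∈ ℕ and all ω ∈ A. -/
open MeasureTheory ProbabilityTheory Real ENNReal

/-- Reformulation of the Borel–Cantelli step-size lemma: under the same hypotheses there
exist a full-measure event and a nonnegative random variable `M ∈ L^p(Ω;ℝ)` such that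
`|X_m(ω)| ≤ M(ω) h_m^{ρ−1/p}` for all `m` and almost all `ω`. -/
theorem borel_cantelli_stepsize_reformulated
    {Ω : Type*} [MeasureSpace Ω] [IsProbabilityMeasure (ℙ : Measure Ω)]
    {d : ℕ} (p : ℝ) (hp : 1 ≤ p) (ρ : ℝ) (hρ : 1 / p < ρ)
    (h : ℕ → ℝ) (hh : ∀ m, 0 < h m ∧ h m < 1) (hsum : Summable h)
    (X : ℕ → Ω → EuclideanSpace ℝ (Fin d))
    (hX : ∀ m, MemLp (X m) (ENNReal.ofReal p) ℙ)
    (hbound : ∃ B : ℝ, ∀ m,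
      (eLpNorm (X m) (ENNReal.ofReal p) ℙ).toReal ≤ B * h m ^ ρ) :
    ∃ M : Ω → ℝ, MemLp M (ENNReal.ofReal p) ℙ ∧ (∀ ω, 0 ≤ M ω) ∧
      ∀ᵐ ω ∂ℙ, ∀ m : ℕ, ‖X m ω‖ ≤ M ω * h m ^ (ρ - 1 / p) := by

  obtain ⟨B, hB⟩ := hbound
  have hp0 : (0:ℝ) < p := lt_of_lt_of_le one_pos hp
  set q : ℝ := ρ - 1 / p with hqdef
  have hq : 0 < q := sub_pos.2 hρ
  have hPtop : ENNReal.ofReal p ≠ ⊤ := ENNReal.ofReal_ne_top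
  have hP0 : ENNReal.ofReal p ≠ 0 := by
    simp [ENNReal.ofReal_eq_zero, not_le, hp0]
  have hPto : (ENNReal.ofReal p).toReal = p := ENNReal.toReal_ofReal hp0.le
  have hB0 : 0 ≤ B := by
    have h0 := hB 0
    have hpos : 0 < h 0 ^ ρ := Real.rpow_pos_of_pos (hh 0).1 ρ
    nlinarith [ENNReal.toReal_nonneg (a := eLpNorm (X 0) (ENNReal.ofReal p) ℙ)]
  set c : ℕ → ℝ≥0∞ := fun m => ENNReal.ofReal ((h m ^ q)⁻¹) with hc
  set S : Ω → ℝ≥0∞ := fun ω => ∑' m, ((‖X m ω‖₊ : ℝ≥0∞) * c m) ^ p with hS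
  have hmeas : ∀ m, AEMeasurable (fun ω => ((‖X m ω‖₊ : ℝ≥0∞) * c m) ^ p) ℙ := fun m =>
    ((hX m).1.enorm.mul_const (c m)).pow_const p
  have hSmeas : AEMeasurable S ℙ := AEMeasurable.ennreal_tsum hmeas
  -- the norm integral identity
  have hnorm : ∀ m, ∫⁻ ω, (‖X m ω‖₊ : ℝ≥0∞) ^ p ∂ℙ
      = eLpNorm (X m) (ENNReal.ofReal p) ℙ ^ p := by
    intro m
    rw [eLpNorm_eq_lintegral_rpow_enorm_toReal hP0 hPtop, hPto, ← ENNReal.rpow_mul,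
      one_div_mul_cancel hp0.ne', ENNReal.rpow_one]
    rfl
  -- termwise integral bound
  have hterm : ∀ m, ∫⁻ ω, ((‖X m ω‖₊ : ℝ≥0∞) * c m) ^ p ∂ℙ
      ≤ ENNReal.ofReal (B ^ p * h m) := by
    intro m
    have hbm : eLpNorm (X m) (ENNReal.ofReal p) ℙ ≤ ENNReal.ofReal (B * h m ^ ρ) :=
      (ENNReal.le_ofReal_iff_toReal_le (hX m).2.ne
        (mul_nonneg hB0 (Real.rpow_nonneg (hh m).1.le ρ))).2 (hB m)
    calc ∫⁻ ω, ((‖X m ω‖₊ : ℝ≥0∞) * c m) ^ p ∂ℙ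
        = ∫⁻ ω, (‖X m ω‖₊ : ℝ≥0∞) ^ p * c m ^ p ∂ℙ := by
          simp_rw [ENNReal.mul_rpow_of_nonneg _ _ hp0.le]
      _ = (∫⁻ ω, (‖X m ω‖₊ : ℝ≥0∞) ^ p ∂ℙ) * c m ^ p := by
          exact lintegral_mul_const'' _ ((hX m).1.enorm.pow_const p)
      _ = eLpNorm (X m) (ENNReal.ofReal p) ℙ ^ p * c m ^ p := by rw [hnorm m]
      _ ≤ ENNReal.ofReal (B * h m ^ ρ) ^ p * c m ^ p := by
          gcongr
      _ = (ENNReal.ofReal (B * h m ^ ρ) * c m) ^ p := by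
          rw [ENNReal.mul_rpow_of_nonneg _ _ hp0.le]
      _ = ENNReal.ofReal (B * h m ^ (1/p)) ^ p := by
          rw [hc, ← ENNReal.ofReal_mul (mul_nonneg hB0 (Real.rpow_nonneg (hh m).1.le ρ))]
          congr 1
          rw [mul_assoc, ← Real.rpow_neg (hh m).1.le, ← Real.rpow_add (hh m).1]
          congr 1
          rw [hqdef]; ring_nf
      _ = ENNReal.ofReal (B ^ p * h m) := by
          rw [ENNReal.ofReal_rpow_of_nonneg (mul_nonneg hB0 (Real.rpow_nonneg (hh m).1.le _)) hp0.le]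
          congr 1
          rw [Real.mul_rpow hB0 (Real.rpow_nonneg (hh m).1.le _), ← Real.rpow_mul (hh m).1.le,
            one_div_mul_cancel hp0.ne', Real.rpow_one]
  have hSint : ∫⁻ ω, S ω ∂ℙ ≠ ⊤ := by
    have h1 : ∫⁻ ω, S ω ∂ℙ = ∑' m, ∫⁻ ω, ((‖X m ω‖₊ : ℝ≥0∞) * c m) ^ p ∂ℙ :=
      lintegral_tsum hmeas
    have h2 : ∑' m, ∫⁻ ω, ((‖X m ω‖₊ : ℝ≥0∞) * c m) ^ p ∂ℙ
        ≤ ∑' m, ENNReal.ofReal (B ^ p * h m) := ENNReal.tsum_le_tsum hterm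
    have h3 : ∑' m, ENNReal.ofReal (B ^ p * h m) = ENNReal.ofReal (∑' m, B ^ p * h m) :=
      (ENNReal.ofReal_tsum_of_nonneg (fun m => mul_nonneg (Real.rpow_nonneg hB0 p) (hh m).1.le)
        (hsum.mul_left _)).symm
    rw [h1]
    exact ne_top_of_le_ne_top (by rw [h3]; exact ENNReal.ofReal_ne_top) h2
  have hae : ∀ᵐ ω ∂ℙ, S ω < ⊤ := ae_lt_top' hSmeas hSint
  refine ⟨fun ω => (S ω ^ (1/p)).toReal, ?_, fun ω => ENNReal.toReal_nonneg, ?_⟩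
  · refine ⟨((hSmeas.pow_const (1/p)).ennreal_toReal).aestronglyMeasurable, ?_⟩
    rw [eLpNorm_eq_lintegral_rpow_enorm_toReal hP0 hPtop, hPto]
    refine ENNReal.rpow_lt_top_of_nonneg (by positivity) ?_
    have hb : ∀ ω, (‖(S ω ^ (1/p)).toReal‖₊ : ℝ≥0∞) ^ p ≤ S ω := by
      intro ω
      have h1 : (‖(S ω ^ (1/p)).toReal‖₊ : ℝ≥0∞) = ENNReal.ofReal ((S ω ^ (1/p)).toReal) :=
        Real.enorm_eq_ofReal ENNReal.toReal_nonneg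
      rw [h1]
      calc ENNReal.ofReal ((S ω ^ (1/p)).toReal) ^ p ≤ (S ω ^ (1/p)) ^ p :=
            ENNReal.rpow_le_rpow ENNReal.ofReal_toReal_le hp0.le
        _ = S ω := by rw [← ENNReal.rpow_mul, one_div_mul_cancel hp0.ne', ENNReal.rpow_one]
    exact ne_top_of_le_ne_top hSint (lintegral_mono hb)
  · filter_upwards [hae] with ω hω m
    have h1 : ((‖X m ω‖₊ : ℝ≥0∞) * c m) ^ p ≤ S ω := ENNReal.le_tsum m
    have h2 : (‖X m ω‖₊ : ℝ≥0∞) * c m ≤ S ω ^ (1/p) := by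
      have h4 := ENNReal.rpow_le_rpow h1 (by positivity : (0:ℝ) ≤ 1/p)
      rwa [← ENNReal.rpow_mul, mul_one_div, div_self hp0.ne', ENNReal.rpow_one] at h4
    have hfin : S ω ^ (1/p) ≠ ⊤ := (ENNReal.rpow_lt_top_of_nonneg (by positivity) hω.ne).ne
    have h3 := ENNReal.toReal_mono hfin h2
    rw [ENNReal.toReal_mul, ENNReal.coe_toReal, coe_nnnorm, ENNReal.toReal_ofReal
      (inv_nonneg.2 (Real.rpow_nonneg (hh m).1.le q))] at h3
    rw [← div_eq_mul_inv, div_le_iff₀ (Real.rpow_pos_of_pos (hh m).1 q)] at h3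
    exact h3
end
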